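/- For any rooted tree $T$ and block size $B$, there exists a worst-case optimal layout (attaining $c(T,0)$) whose blocks form a convex partition, i.e., the intersection of each block with any root-to-leaf path is a (possibly empty) contiguous path. -/

import Mathlib

/-! Model of rooted trees, memory layouts into blocks, and the
worst-case root-to-leaf I/O cost `layoutCost t B k` (minimum over
layouts with at most `B` vertices per nonzero block and at most `k`
vertices in the free block `0`, of the maximum over root-to-leaf paths
of the number of distinct nonzero blocks on the path).
Vertices are addressed by their list of child indices from the root. -/

inductive RTree : Type where
  | node : List RTree → RTree

namespace RTree

mutual
  /-- Addresses of all vertices of the tree. The root has address `[]`. -/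
  def verts : RTree → List (List ℕ)
    | .node ts => [] :: vertsAux 0 ts
  def vertsAux : ℕ → List RTree → List (List ℕ)
    | _, [] => []
    | i, t :: ts => (t.verts.map (i :: ·)) ++ vertsAux (i + 1) ts
end

mutual
  /-- Addresses of all leaves; a root-to-leaf path consists of all
  prefixes (`List.inits`) of a leaf address. -/
  def paths : RTree → List (List ℕ)
    | .node [] => [[]]
    | .node (t :: ts) => pathsAux 0 (t :: ts)
  def pathsAux : ℕ → List RTree → List (List ℕ)
    | _, [] => []
    | i, t :: ts => (t.paths.map (i :: ·)) ++ pathsAux (i + 1) ts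
end

end RTree

/-- Number of vertices of `t` that layout `L` assigns to block `b`. -/
def blockCount (t : RTree) (L : List ℕ → ℕ) (b : ℕ) : ℕ :=
  (t.verts.filter (fun v => L v = b)).length

/-- `L` is a valid layout of `t` with block size `B` and at most `k`
vertices in the free block `0`. -/
def okLayout (t : RTree) (B k : ℕ) (L : List ℕ → ℕ) : Prop :=
  (∀ v ∈ t.verts, L v ≤ t.verts.length) ∧
  (∀ b : ℕ, b ≠ 0 → blockCount t L b ≤ B) ∧
  blockCount t L 0 ≤ k

/-- Cost of the root-to-leaf path ending at leaf address `p`: the number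
of distinct nonzero blocks among the vertices on the path. -/
def pathCost (L : List ℕ → ℕ) (p : List ℕ) : ℕ :=
  (((p.inits.map L).dedup).filter (fun b => b ≠ 0)).length

/-- Worst-case cost of layout `L` on tree `t`. -/
def maxCost (t : RTree) (L : List ℕ → ℕ) : ℕ :=
  (t.paths.map (pathCost L)).foldr max 0

/-- `c(T,k)`: worst-case optimal I/O cost of `t` with block size `B` and
`k` free slots in block `0`. -/
noncomputable def layoutCost (t : RTree) (B k : ℕ) : ℕ :=
  sInf {m : ℕ | ∃ L : List ℕ → ℕ, okLayout t B k L ∧ maxCost t L = m}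

/-- `L` is convex on `t`: on every root-to-leaf path, the vertices
assigned to any fixed block form a contiguous (possibly empty) subpath. -/
def convexLayout (t : RTree) (L : List ℕ → ℕ) : Prop :=
  ∀ p ∈ t.paths, ∀ b i j l : ℕ, i ≤ j → j ≤ l →
    l < (p.inits.map L).length →
    (p.inits.map L).getD i 0 = b → (p.inits.map L).getD l 0 = b →
    (p.inits.map L).getD j 0 = b

section Lemmas
open List

namespace RTree

theorem vertsAux_shape : ∀ (ts : List RTree) (i : ℕ) (y : List ℕ),
    y ∈ RTree.vertsAux i ts → ∃ j tl, y = j :: tl ∧ i ≤ j := by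
  intro ts
  induction ts with
  | nil => intro i y h; simp [RTree.vertsAux] at h
  | cons t ts ih =>
    intro i y h
    simp only [RTree.vertsAux, List.mem_append, List.mem_map] at h
    rcases h with ⟨a, _, rfl⟩ | h
    · exact ⟨i, a, rfl, le_refl i⟩
    · obtain ⟨j, tl, rfl, hj⟩ := ih (i+1) y h
      exact ⟨j, tl, rfl, by omega⟩

mutual
theorem verts_nodup : (t : RTree) → t.verts.Nodup
  | .node ts => by
    rw [RTree.verts]
    refine List.nodup_cons.2 ⟨fun h => ?_, vertsAux_nodup 0 ts⟩
    · obtain ⟨j, tl, h, -⟩ := vertsAux_shape ts 0 [] h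
      cases h
theorem vertsAux_nodup : (i : ℕ) → (ts : List RTree) → (RTree.vertsAux i ts).Nodup
  | _, [] => by rw [RTree.vertsAux]; exact List.nodup_nil
  | i, t :: ts => by
    rw [RTree.vertsAux]
    refine List.Nodup.append ?_ (vertsAux_nodup (i+1) ts) ?_
    · exact (verts_nodup t).map (fun a b h => by injection h)
    · intro y hy1 hy2
      obtain ⟨a, -, rfl⟩ := List.mem_map.1 hy1
      obtain ⟨j, tl, he, hj⟩ := vertsAux_shape ts (i+1) _ hy2
      injection he with h1 h2
      omega
end

theorem nil_mem_verts (t : RTree) : [] ∈ t.verts := by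
  obtain ⟨ts⟩ := t; rw [RTree.verts]; exact List.mem_cons_self

mutual
theorem prefix_paths_mem : (t : RTree) → ∀ p ∈ t.paths, ∀ y, y <+: p → y ∈ t.verts
  | .node [] => by
    intro p hp y hy
    rw [RTree.paths] at hp
    simp at hp
    subst hp
    rw [List.prefix_nil] at hy
    subst hy
    exact nil_mem_verts _
  | .node (t :: ts) => by
    intro p hp y hy
    rw [RTree.paths] at hp
    rcases prefix_pathsAux_mem 0 (t :: ts) p hp y hy with rfl | h
    · exact nil_mem_verts _
    · rw [RTree.verts]; exact List.mem_cons_of_mem _ h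
theorem prefix_pathsAux_mem : (i : ℕ) → (ts : List RTree) → ∀ p ∈ RTree.pathsAux i ts,
    ∀ y, y <+: p → y = [] ∨ y ∈ RTree.vertsAux i ts
  | _, [] => by intro p hp; rw [RTree.pathsAux] at hp; simp at hp
  | i, t :: ts => by
    intro p hp y hy
    rw [RTree.pathsAux] at hp
    rcases List.mem_append.1 hp with hp | hp
    · obtain ⟨p', hp', rfl⟩ := List.mem_map.1 hp
      match y, hy with
      | [], _ => exact Or.inl rfl
      | (a :: y'), hy =>
        rw [List.cons_prefix_cons] at hy
        obtain ⟨rfl, hy'⟩ := hy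
        refine Or.inr ?_
        rw [RTree.vertsAux]
        exact List.mem_append_left _ (List.mem_map.2
          ⟨y', prefix_paths_mem t p' hp' y' hy', rfl⟩)
    · rcases prefix_pathsAux_mem (i+1) ts p hp y hy with rfl | h
      · exact Or.inl rfl
      · refine Or.inr ?_
        rw [RTree.vertsAux]
        exact List.mem_append_right _ h
end

end RTree
end Lemmas

section Machinery
open List

lemma blk_eq (L : List ℕ → ℕ) (p : List ℕ) (a : ℕ) (ha : a ≤ p.length) :
    (p.inits.map L).getD a 0 = L (p.take a) := by
  have hl : a < (p.inits.map L).length := by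
    simp [List.length_inits]; omega
  rw [List.getD_eq_getElem _ _ hl]
  simp

lemma dfl_card (m : List ℕ) (q : ℕ → Bool) :
    (m.dedup.filter q).length = (m.toFinset.filter (q ·)).card := by
  have h1 : (m.dedup.filter q).Nodup := (m.nodup_dedup).filter q
  have h2 : m.dedup.toFinset = m.toFinset := by ext a; simp
  rw [← h1.dedup, ← List.card_toFinset, List.toFinset_filter, h2]

lemma dfl_le {m' m : List ℕ} (h : m'.toFinset ⊆ m.toFinset) (q : ℕ → Bool) :
    (m'.dedup.filter q).length ≤ (m.dedup.filter q).length := by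
  rw [dfl_card, dfl_card]
  exact Finset.card_le_card (Finset.filter_subset_filter _ h)

lemma foldr_max_le {α : Type*} {l : List α} {f g : α → ℕ} (h : ∀ a ∈ l, f a ≤ g a) :
    (l.map f).foldr max 0 ≤ (l.map g).foldr max 0 := by
  induction l with
  | nil => simp
  | cons a l ih =>
    simp only [List.map_cons, List.foldr_cons]
    exact max_le_max (h a (List.mem_cons_self))
      (ih fun b hb => h b (List.mem_cons_of_mem _ hb))

lemma sum_map_le {α : Type*} {l : List α} {f g : α → ℕ} (h : ∀ a ∈ l, f a ≤ g a) :
    (l.map f).sum ≤ (l.map g).sum := by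
  induction l with
  | nil => simp
  | cons a l ih =>
    simp only [List.map_cons, List.sum_cons]
    exact Nat.add_le_add (h a (List.mem_cons_self))
      (ih fun b hb => h b (List.mem_cons_of_mem _ hb))

lemma sum_map_lt {α : Type*} {l : List α} {f g : α → ℕ} (h : ∀ a ∈ l, f a ≤ g a)
    {a₀ : α} (ha₀ : a₀ ∈ l) (hlt : f a₀ < g a₀) :
    (l.map f).sum < (l.map g).sum := by
  induction l with
  | nil => simp at ha₀
  | cons a l ih =>
    simp only [List.map_cons, List.sum_cons]
    rcases List.mem_cons.1 ha₀ with rfl | ha₀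
    · exact Nat.add_lt_add_of_lt_of_le hlt
        (sum_map_le fun b hb => h b (List.mem_cons_of_mem _ hb))
    · exact Nat.add_lt_add_of_le_of_lt (h a (List.mem_cons_self))
        (ih (fun b hb => h b (List.mem_cons_of_mem _ hb)) ha₀)

/-- Swap the blocks of two addresses. -/
def swapL (L : List ℕ → ℕ) (z w : List ℕ) : List ℕ → ℕ :=
  fun v => if v = z then L w else if v = w then L z else L v

lemma swapL_z (L : List ℕ → ℕ) (z w : List ℕ) : swapL L z w z = L w := if_pos rfl

lemma swapL_w (L : List ℕ → ℕ) {z w : List ℕ} (hzw : z ≠ w) : swapL L z w w = L z := by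
  rw [swapL, if_neg (Ne.symm hzw), if_pos rfl]

lemma swapL_ne (L : List ℕ → ℕ) {z w v : List ℕ} (h1 : v ≠ z) (h2 : v ≠ w) :
    swapL L z w v = L v := by
  rw [swapL, if_neg h1, if_neg h2]

lemma toFinset_swap_eq (L : List ℕ → ℕ) {z w x : List ℕ} (hzw : z ≠ w)
    (hzx : z ∈ x.inits) (hwx : w ∈ x.inits) :
    (x.inits.map (swapL L z w)).toFinset = (x.inits.map L).toFinset := by
  ext b
  simp only [List.mem_toFinset, List.mem_map]
  constructor
  · rintro ⟨y, hy, rfl⟩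
    by_cases h1 : y = z
    · exact ⟨w, hwx, by rw [h1, swapL_z]⟩
    by_cases h2 : y = w
    · exact ⟨z, hzx, by rw [h2, swapL_w _ hzw]⟩
    · exact ⟨y, hy, (swapL_ne _ h1 h2).symm⟩
  · rintro ⟨y, hy, rfl⟩
    by_cases h1 : y = z
    · exact ⟨w, hwx, by rw [h1, swapL_w _ hzw]⟩
    by_cases h2 : y = w
    · exact ⟨z, hzx, by rw [h2, swapL_z]⟩
    · exact ⟨y, hy, swapL_ne _ h1 h2⟩

lemma toFinset_swap_subset (L : List ℕ → ℕ) {z w u x : List ℕ} (hP : L w = L u)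
    (hu : u ∈ x.inits) (hzx : z ∈ x.inits) (hwx : w ∉ x.inits) :
    (x.inits.map (swapL L z w)).toFinset ⊆ (x.inits.map L).toFinset := by
  intro b hb
  simp only [List.mem_toFinset, List.mem_map] at hb ⊢
  obtain ⟨y, hy, rfl⟩ := hb
  by_cases h1 : y = z
  · exact ⟨u, hu, by rw [h1, swapL_z, hP]⟩
  by_cases h2 : y = w
  · exact absurd (h2 ▸ hy) hwx
  · exact ⟨y, hy, (swapL_ne _ h1 h2).symm⟩

lemma blockCount_swap (t : RTree) (L : List ℕ → ℕ) {z w : List ℕ}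
    (hz : z ∈ t.verts) (hw : w ∈ t.verts) (hzw : z ≠ w) (b : ℕ) :
    blockCount t (swapL L z w) b = blockCount t L b := by
  have hnd := RTree.verts_nodup t
  obtain ⟨r, hperm, hzr, hwr⟩ : ∃ r, t.verts ~ z :: w :: r ∧ z ∉ r ∧ w ∉ r := by
    have h1 := List.perm_cons_erase hz
    have hw'' := (List.mem_cons.1 (h1.mem_iff.1 hw)).resolve_left (Ne.symm hzw)
    have hperm := h1.trans ((List.perm_cons_erase hw'').cons z)
    have hnd2 := (hperm.nodup_iff).1 hnd
    simp only [List.nodup_cons, List.mem_cons] at hnd2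
    exact ⟨_, hperm, fun h => hnd2.1 (Or.inr h), hnd2.2.1⟩
  unfold blockCount
  rw [← List.countP_eq_length_filter, ← List.countP_eq_length_filter,
    List.Perm.countP_eq _ hperm, List.Perm.countP_eq _ hperm]
  have hrc : List.countP (fun v => decide (swapL L z w v = b)) r
      = List.countP (fun v => decide (L v = b)) r := by
    apply List.countP_congr
    intro y hy
    have h1 : y ≠ z := fun h => hzr (h ▸ hy)
    have h2 : y ≠ w := fun h => hwr (h ▸ hy)
    simp [swapL_ne _ h1 h2]
  simp only [List.countP_cons, hrc, swapL_z, swapL_w _ hzw]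
  split_ifs <;> omega

end Machinery

section Main
open List

/-- Potential function: total over vertices of the number of distinct
blocks on the root path. -/
def Phi (t : RTree) (L : List ℕ → ℕ) : ℕ :=
  (t.verts.map fun x => ((x.inits.map L).toFinset).card).sum

lemma filter_length_le_one {α : Type*} [DecidableEq α] {l : List α} (hnd : l.Nodup)
    (p : α → Bool) (h : ∀ a ∈ l, ∀ b ∈ l, p a → p b → a = b) :
    (l.filter p).length ≤ 1 := by
  rcases hf : l.filter p with _ | ⟨x, _ | ⟨y, r⟩⟩
  · simp
  · simp
  · exfalso
    have hx : x ∈ l.filter p := by rw [hf]; exact List.mem_cons_self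
    have hy : y ∈ l.filter p := by rw [hf]; simp
    have hnd' : (l.filter p).Nodup := hnd.filter p
    rw [hf] at hnd'
    have hxy : x ≠ y := by
      rcases List.nodup_cons.1 hnd' with ⟨hx1, -⟩
      exact fun he => hx1 (he ▸ List.mem_cons_self)
    obtain ⟨hxl, hpx⟩ := List.mem_filter.1 hx
    obtain ⟨hyl, hpy⟩ := List.mem_filter.1 hy
    exact hxy (h x hxl y hyl hpx hpy)

lemma exists_okLayout (t : RTree) (B : ℕ) (hB : 1 ≤ B) :
    ∃ L, okLayout t B 0 L := by
  classical
  refine ⟨fun v => @List.idxOf (List ℕ) instBEqOfDecidableEq v t.verts + 1, ?_, ?_, ?_⟩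
  · intro v hv
    have := (@List.idxOf_lt_length_iff _ instBEqOfDecidableEq _ _ _).2 hv
    simp only []
    omega
  · intro b hb
    unfold blockCount
    simp only []
    refine le_trans (filter_length_le_one (RTree.verts_nodup t) _ ?_) hB
    intro v hv v' hv' hpv hpv'
    simp only [decide_eq_true_eq] at hpv hpv'
    exact (@List.idxOf_inj _ instBEqOfDecidableEq _ _ _ _ hv).1 (by omega)
  · unfold blockCount
    simp only []
    have : t.verts.filter
        (fun v => decide (@List.idxOf (List ℕ) instBEqOfDecidableEq v t.verts + 1 = 0)) = [] := by
      rw [List.filter_eq_nil_iff]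
      intro v hv
      simp
    rw [this]
    simp


end Main

/-- There is a worst-case optimal layout (attaining `c(T,0)`) whose
blocks form a convex partition. -/
theorem stmt9 (t : RTree) (B : ℕ) (hB : 1 ≤ B) :
    ∃ L : List ℕ → ℕ, okLayout t B 0 L ∧ maxCost t L = layoutCost t B 0 ∧
      convexLayout t L := by
  classical
  obtain ⟨L₀, hL₀⟩ := exists_okLayout t B hB
  have hne : {m : ℕ | ∃ L, okLayout t B 0 L ∧ maxCost t L = m}.Nonempty :=
    ⟨maxCost t L₀, L₀, hL₀, rfl⟩
  have hlc : layoutCost t B 0 ∈ {m : ℕ | ∃ L, okLayout t B 0 L ∧ maxCost t L = m} :=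
    Nat.sInf_mem hne
  have hne2 : {n : ℕ | ∃ L, okLayout t B 0 L ∧ maxCost t L = layoutCost t B 0 ∧
      Phi t L = n}.Nonempty := by
    obtain ⟨L1, h1, h2⟩ := hlc
    exact ⟨Phi t L1, L1, h1, h2, rfl⟩
  obtain ⟨L, hok, hopt, hphi⟩ := Nat.sInf_mem hne2
  refine ⟨L, hok, hopt, ?_⟩
  by_contra hconv
  unfold convexLayout at hconv
  push_neg at hconv
  obtain ⟨p, hp, b, i, j, l, hij, hjl, hlen, hib, hlb, hjb⟩ := hconv
  set m := p.inits.map L with hm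
  have hmlen : m.length = p.length + 1 := by simp [hm, List.length_inits]
  have hijs : i < j := lt_of_le_of_ne hij (by rintro rfl; exact hjb hib)
  have hjls : j < l := lt_of_le_of_ne hjl (by rintro rfl; exact hjb hlb)
  have hBad : ∃ l', l' < m.length ∧ ∃ i' j', i' < j' ∧ j' < l' ∧
      m.getD i' 0 = m.getD l' 0 ∧ m.getD j' 0 ≠ m.getD l' 0 :=
    ⟨l, hlen, i, j, hijs, hjls, by rw [hib, hlb], by rw [hlb]; exact hjb⟩
  set l₀ := Nat.find hBad with hl₀def
  have hmin : ∀ a, a < l₀ → ¬(a < m.length ∧ ∃ i' j', i' < j' ∧ j' < a ∧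
      m.getD i' 0 = m.getD a 0 ∧ m.getD j' 0 ≠ m.getD a 0) :=
    fun a ha => Nat.find_min hBad ha
  obtain ⟨hl₀len, i₀, j₀, hij₀, hj₀l, he₀, hne₀⟩ := Nat.find_spec hBad
  set P := m.getD l₀ 0 with hP
  set iG := Nat.findGreatest (fun a => m.getD a 0 = P) (l₀ - 1) with hiGdef
  have hi₀l : i₀ ≤ l₀ - 1 := by omega
  have hiP : m.getD iG 0 = P := Nat.findGreatest_spec (P := fun a => m.getD a 0 = P) hi₀l he₀
  have hiGle : iG ≤ l₀ - 1 := Nat.findGreatest_le (P := fun a => m.getD a 0 = P) _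
  have hgreat : ∀ a, iG < a → a ≤ l₀ - 1 → m.getD a 0 ≠ P :=
    fun a h1 h2 => Nat.findGreatest_is_greatest (P := fun a => m.getD a 0 = P) h1 h2
  have hi1 : iG + 1 < l₀ := by
    rcases Nat.lt_or_ge (iG + 1) l₀ with h | h
    · exact h
    · exfalso
      have hiGeq : iG = l₀ - 1 := by omega
      have e1 : m.getD (l₀ - 1) 0 = P := hiGeq ▸ hiP
      have hj₀lt : j₀ < l₀ - 1 := by
        rcases Nat.lt_or_ge j₀ (l₀ - 1) with h' | h'
        · exact h'
        · exfalso
          have : j₀ = l₀ - 1 := by omega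
          exact hne₀ (this ▸ e1)
      exact hmin (l₀ - 1) (by omega)
        ⟨by omega, i₀, j₀, hij₀, hj₀lt, by rw [he₀, e1], by rw [e1]; exact hne₀⟩
  have hcne : m.getD (iG + 1) 0 ≠ P := hgreat _ (Nat.lt_succ_self iG) (by omega)
  set c := m.getD (iG + 1) 0 with hcdef
  have hfresh : ∀ a, a ≤ iG → m.getD a 0 ≠ c := by
    intro a ha hac
    rcases Nat.lt_or_ge a iG with hlt | hge
    · exact hmin (iG + 1) (by omega)
        ⟨by omega, a, iG, hlt, Nat.lt_succ_self iG,
         by rw [hac, hcdef], by rw [hiP, ← hcdef]; exact Ne.symm hcne⟩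
    · have : a = iG := by omega
      exact hcne ((hac.symm.trans (this ▸ hiP)).symm ▸ rfl)
  have hl₀p : l₀ ≤ p.length := by omega
  set z := p.take (iG + 1) with hzdef
  set w := p.take l₀ with hwdef
  set u := p.take iG with hudef
  have hLz : L z = c := by
    rw [hcdef, hm, hzdef]; exact (blk_eq L p (iG + 1) (by omega)).symm
  have hLw : L w = P := by
    rw [hP, hm, hwdef]; exact (blk_eq L p l₀ (by omega)).symm
  have hLu : L u = P := by
    rw [hudef]
    have := blk_eq L p iG (by omega)
    rw [← hm] at this
    rw [← this]; exact hiP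
  have hlz : z.length = iG + 1 := by rw [hzdef]; simp [List.length_take]; omega
  have hlw : w.length = l₀ := by rw [hwdef]; simp [List.length_take]; omega
  have hzw : z ≠ w := by
    intro h
    have := hlz
    rw [h, hlw] at this
    omega
  have hzp : z <+: p := hzdef ▸ List.take_prefix _ _
  have hwp : w <+: p := hwdef ▸ List.take_prefix _ _
  have huz : u <+: z := by
    have h1 : z.take iG = u := by
      rw [hzdef, hudef, List.take_take]
      congr 1
      omega
    exact h1 ▸ List.take_prefix iG z
  have hzw' : z <+: w := by
    have h1 : w.take (iG + 1) = z := by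
      rw [hzdef, hwdef, List.take_take]
      congr 1
      omega
    exact h1 ▸ List.take_prefix (iG + 1) w
  have hzv : z ∈ t.verts := RTree.prefix_paths_mem t p hp z hzp
  have hwv : w ∈ t.verts := RTree.prefix_paths_mem t p hp w hwp
  set L' := swapL L z w with hL'
  have hok' : okLayout t B 0 L' := by
    have hbc : ∀ b', blockCount t L' b' = blockCount t L b' :=
      fun b' => blockCount_swap t L hzv hwv hzw b'
    refine ⟨?_, ?_, ?_⟩
    · intro v hv
      rw [hL', swapL]
      split_ifs
      · exact hok.1 w hwv
      · exact hok.1 z hzv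
      · exact hok.1 v hv
    · intro b' hb'
      rw [hbc]
      exact hok.2.1 b' hb'
    · rw [hbc]
      exact hok.2.2
  have hsub : ∀ x : List ℕ, (x.inits.map L').toFinset ⊆ (x.inits.map L).toFinset := by
    intro x
    by_cases hwx : w ∈ x.inits
    · have hzx : z ∈ x.inits := (List.mem_inits _ _).2 (hzw'.trans ((List.mem_inits _ _).1 hwx))
      rw [hL']
      exact le_of_eq (toFinset_swap_eq L hzw hzx hwx)
    · by_cases hzx : z ∈ x.inits
      · have hux : u ∈ x.inits := (List.mem_inits _ _).2 (huz.trans ((List.mem_inits _ _).1 hzx))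
        rw [hL']
        exact toFinset_swap_subset L (hLw.trans hLu.symm) hux hzx hwx
      · have heq : x.inits.map L' = x.inits.map L := by
          apply List.map_congr_left
          intro y hy
          rw [hL']
          exact swapL_ne _ (fun h => hzx (h ▸ hy)) (fun h => hwx (h ▸ hy))
        rw [heq]
  have hpc : ∀ q ∈ t.paths, pathCost L' q ≤ pathCost L q := by
    intro q _
    unfold pathCost
    exact dfl_le (hsub q) _
  have hmc : maxCost t L' ≤ maxCost t L := by
    unfold maxCost
    exact foldr_max_le hpc
  have hopt' : maxCost t L' = layoutCost t B 0 :=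
    le_antisymm (hmc.trans_eq hopt) (Nat.sInf_le ⟨L', hok', rfl⟩)
  have hglt : ((z.inits.map L').toFinset).card < ((z.inits.map L).toFinset).card := by
    apply Finset.card_lt_card
    refine ⟨hsub z, fun hsup => ?_⟩
    have hcR : c ∈ (z.inits.map L).toFinset :=
      List.mem_toFinset.2 (List.mem_map.2 ⟨z, (List.mem_inits _ _).2 (List.prefix_refl z), hLz⟩)
    have hcL : c ∉ (z.inits.map L').toFinset := by
      rw [List.mem_toFinset]
      intro h
      obtain ⟨y, hy, hyc⟩ := List.mem_map.1 h
      have hyz : y <+: z := (List.mem_inits _ _).1 hy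
      have hyp : y <+: p := hyz.trans hzp
      have hylen : y.length ≤ iG + 1 := by
        have := hyz.length_le
        omega
      have hyplen : y.length ≤ p.length := hyp.length_le
      have hyeq : y = p.take y.length := List.prefix_iff_eq_take.1 hyp
      rcases Nat.lt_or_ge y.length (iG + 1) with hcase | hcase
      · have hyne_z : y ≠ z := by
          intro h'
          have := congrArg List.length h'
          rw [hlz] at this
          omega
        have hyne_w : y ≠ w := by
          intro h'
          have := congrArg List.length h'
          rw [hlw] at this
          omega
        rw [hL', swapL_ne _ hyne_z hyne_w] at hyc
        have hb := blk_eq L p y.length hyplen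
        rw [← hm] at hb
        exact hfresh y.length (by omega) (by rw [hb, ← hyeq, hyc])
      · have hyz' : y = z := by
          rw [hyeq, hzdef]
          congr 1
          omega
        rw [hyz', hL', swapL_z] at hyc
        exact hcne (hyc ▸ hLw ▸ rfl : c = P)
    exact hcL (hsup hcR)
  have hPhi : Phi t L' < Phi t L := by
    unfold Phi
    exact sum_map_lt (fun x _ => Finset.card_le_card (hsub x)) hzv hglt
  have hmem2 : Phi t L' ∈ {n : ℕ | ∃ L, okLayout t B 0 L ∧
      maxCost t L = layoutCost t B 0 ∧ Phi t L = n} := ⟨L', hok', hopt', rfl⟩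
  have hle := Nat.sInf_le hmem2
  omega
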